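/- Every quadratic polynomial q on ℝ² with nonzero coefficient vector that vanishes at A, B, C, P, Q also vanishes at the six points T_P(T_{P'}⁻¹(N)) and T_{P'}(T_P⁻¹(N)) for N ∈ {A, B, C}. (These six points are the images λ⁻¹(A), λ⁻¹(B), λ⁻¹(C), λ(A), λ(B), λ(C) of the vertices under λ = T_{P'}∘T_P⁻¹, and they all lie on the conic 𝒞_P = ABCPQ.) -/

import Mathlib

noncomputable section

abbrev Pt := EuclideanSpace ℝ (Fin 2)

lemma symm_eq (T : Pt ≃ᵃ[ℝ] Pt) (x y : Pt) (h : T y = x) : T.symm x = y := by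
  rw [← h, AffineEquiv.symm_apply_apply]

lemma comb (T : Pt ≃ᵃ[ℝ] Pt) (A B C : Pt) (u v w : ℝ) (h : u + v + w = 1) :
    T (u • A + v • B + w • C) = u • T A + v • T B + w • T C := by
  have hw : w = 1 - u - v := by linarith
  subst hw
  have h1 : u • A + v • B + (1 - u - v) • C = (u • (A - C) + v • (B - C)) +ᵥ C := by
    simp only [vadd_eq_add]; module
  rw [h1, T.map_vadd, map_add, map_smul, map_smul]
  have e1 : T.linear (A - C) = T A - T C := by
    simpa [vsub_eq_sub] using T.toAffineMap.linearMap_vsub A C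
  have e2 : T.linear (B - C) = T B - T C := by
    simpa [vsub_eq_sub] using T.toAffineMap.linearMap_vsub B C
  rw [e1, e2]
  simp only [vadd_eq_add]; module

/-- The quadratic polynomial `a*x^2 + b*x*y + c*y^2 + d*x + e*y + f` evaluated at a point. -/
def qeval (a b c d e f : ℝ) (W : Pt) : ℝ :=
  a * (W 0)^2 + b * (W 0) * (W 1) + c * (W 1)^2 + d * (W 0) + e * (W 1) + f

lemma qexp (a b c d e f : ℝ) (A B C : Pt) (u v w : ℝ) (h : u + v + w = 1) :
    qeval a b c d e f (u • A + v • B + w • C) =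
      u^2 * qeval a b c d e f A + v^2 * qeval a b c d e f B + w^2 * qeval a b c d e f C
      + u*v*(4 * qeval a b c d e f ((2:ℝ)⁻¹ • (A + B)) - qeval a b c d e f A - qeval a b c d e f B)
      + u*w*(4 * qeval a b c d e f ((2:ℝ)⁻¹ • (A + C)) - qeval a b c d e f A - qeval a b c d e f C)
      + v*w*(4 * qeval a b c d e f ((2:ℝ)⁻¹ • (B + C)) - qeval a b c d e f B - qeval a b c d e f C) := by
  have hw : w = 1 - u - v := by linarith
  subst hw
  simp only [qeval, PiLp.add_apply, PiLp.smul_apply, smul_eq_mul]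
  ring

set_option maxHeartbeats 4000000 in
theorem stmt1
    (A B C : Pt) (hABC : AffineIndependent ℝ ![A, B, C])
    (α β γ : ℝ) (hsum : α + β + γ = 1)
    (hα : α ≠ 0) (hβ : β ≠ 0) (hγ : γ ≠ 0)
    (hβγ : β + γ ≠ 0) (hγα : γ + α ≠ 0) (hαβ : α + β ≠ 0)
    (hab : α ≠ β) (hbc : β ≠ γ) (hca : γ ≠ α)
    (hs : α * β + β * γ + γ * α ≠ 0)
    (G : Pt) (hG : G = (3:ℝ)⁻¹ • (A + B + C))
    (P : Pt) (hP : P = α • A + β • B + γ • C)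
    (P' : Pt)
    (hP'' : P' = (α * β + β * γ + γ * α)⁻¹ • ((β * γ) • A + (γ * α) • B + (α * β) • C))
    (Q : Pt) (hQ : Q = G - (2:ℝ)⁻¹ • (P' - G))
    (Q' : Pt) (hQ' : Q' = G - (2:ℝ)⁻¹ • (P - G))
    (D E F : Pt)
    (hD : D = (β + γ)⁻¹ • (β • B + γ • C))
    (hE : E = (γ + α)⁻¹ • (α • A + γ • C))
    (hF : F = (α + β)⁻¹ • (α • A + β • B))
    (D₃ E₃ F₃ : Pt)
    (hD₃ : D₃ = (β + γ)⁻¹ • (γ • B + β • C))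
    (hE₃ : E₃ = (γ + α)⁻¹ • (γ • A + α • C))
    (hF₃ : F₃ = (α + β)⁻¹ • (β • A + α • B))
    (TP : Pt ≃ᵃ[ℝ] Pt) (hTPA : TP A = D) (hTPB : TP B = E) (hTPC : TP C = F)
    (TP' : Pt ≃ᵃ[ℝ] Pt) (hTP'A : TP' A = D₃) (hTP'B : TP' B = E₃) (hTP'C : TP' C = F₃)
    (a b c d e f : ℝ) (hq : (a, b, c, d, e, f) ≠ (0, 0, 0, 0, 0, 0))
    (hqA : qeval a b c d e f A = 0) (hqB : qeval a b c d e f B = 0)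
    (hqC : qeval a b c d e f C = 0) (hqP : qeval a b c d e f P = 0)
    (hqQ : qeval a b c d e f Q = 0)
    :
    ∀ N ∈ ({A, B, C} : Set Pt),
      qeval a b c d e f (TP (TP'.symm N)) = 0 ∧
      qeval a b c d e f (TP' (TP.symm N)) = 0 := by
  have key : ∀ u v w : ℝ, u + v + w = 1 →
      qeval a b c d e f (u • A + v • B + w • C) =
        u*v*(4 * qeval a b c d e f ((2:ℝ)⁻¹ • (A + B)))
        + u*w*(4 * qeval a b c d e f ((2:ℝ)⁻¹ • (A + C)))
        + v*w*(4 * qeval a b c d e f ((2:ℝ)⁻¹ • (B + C))) := by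
    intro u v w h
    rw [qexp a b c d e f A B C u v w h, hqA, hqB, hqC]; ring
  obtain ⟨X, Y, Z, key⟩ : ∃ X Y Z : ℝ, ∀ u v w : ℝ, u + v + w = 1 →
      qeval a b c d e f (u • A + v • B + w • C) = u*v*X + u*w*Y + v*w*Z := ⟨_, _, _, key⟩
  have h1 : α*β*X + α*γ*Y + β*γ*Z = 0 := by
    rw [← key α β γ hsum, ← hP]; exact hqP
  have hQcomb : Q = (α*(β+γ)/(2*(α * β + β * γ + γ * α))) • A
      + (β*(γ+α)/(2*(α * β + β * γ + γ * α))) • B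
      + (γ*(α+β)/(2*(α * β + β * γ + γ * α))) • C := by
    rw [hQ, hG, hP'']
    generalize hk : α * β + β * γ + γ * α = k at hs ⊢
    match_scalars <;> (field_simp; subst hk; ring)
  have hq2 : (α*(β+γ)/(2*(α * β + β * γ + γ * α))) * (β*(γ+α)/(2*(α * β + β * γ + γ * α))) * X
      + (α*(β+γ)/(2*(α * β + β * γ + γ * α))) * (γ*(α+β)/(2*(α * β + β * γ + γ * α))) * Y
      + (β*(γ+α)/(2*(α * β + β * γ + γ * α))) * (γ*(α+β)/(2*(α * β + β * γ + γ * α))) * Z = 0 := by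
    rw [← key _ _ _ (by generalize hk : α * β + β * γ + γ * α = k at hs ⊢; field_simp; subst hk; ring), ← hQcomb]; exact hqQ
  have h2 : α*β*(β+γ)*(γ+α)*X + α*γ*(β+γ)*(α+β)*Y + β*γ*(γ+α)*(α+β)*Z = 0 := by
    have hk0 : (2:ℝ)*(α * β + β * γ + γ * α) ≠ 0 := mul_ne_zero two_ne_zero hs
    generalize hk : (2:ℝ)*(α * β + β * γ + γ * α) = k at hq2 hk0
    field_simp at hq2
    linear_combination hq2
  have hsymg1A : TP'.symm A = ((-(α*(β+γ)))/(2*β*γ)) • A + ((β*(γ+α))/(2*β*γ)) • B + ((γ*(α+β))/(2*β*γ)) • C := by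
    apply symm_eq
    rw [comb TP' A B C ((-(α*(β+γ)))/(2*β*γ)) ((β*(γ+α))/(2*β*γ)) ((γ*(α+β))/(2*β*γ)) (by field_simp; ring),
      hTP'A, hTP'B, hTP'C, hD₃, hE₃, hF₃]
    match_scalars <;> (field_simp; ring)
  have hptg1A : TP (TP'.symm A) = ((α*(β+γ))/(2*β*γ)) • A + ((β*(γ-α))/(2*β*γ)) • B + ((γ*(β-α))/(2*β*γ)) • C := by
    rw [hsymg1A, comb TP A B C ((-(α*(β+γ)))/(2*β*γ)) ((β*(γ+α))/(2*β*γ)) ((γ*(α+β))/(2*β*γ)) (by field_simp; ring),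
      hTPA, hTPB, hTPC, hD, hE, hF]
    match_scalars <;> field_simp <;> ring
  have hSg1A : α*β*(β+γ)*(γ-α)*X + α*γ*(β+γ)*(β-α)*Y + β*γ*(γ-α)*(β-α)*Z = 0 := by
    linear_combination (-2*α*(β+γ)) * h1 + h2
  have g1A : qeval a b c d e f (TP (TP'.symm A)) = 0 := by
    rw [hptg1A, key ((α*(β+γ))/(2*β*γ)) ((β*(γ-α))/(2*β*γ)) ((γ*(β-α))/(2*β*γ)) (by field_simp; ring)]
    linear_combination (1/(4*β^2*γ^2)) * hSg1A
  have hsymg1B : TP'.symm B = ((α*(β+γ))/(2*γ*α)) • A + ((-(β*(γ+α)))/(2*γ*α)) • B + ((γ*(α+β))/(2*γ*α)) • C := by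
    apply symm_eq
    rw [comb TP' A B C ((α*(β+γ))/(2*γ*α)) ((-(β*(γ+α)))/(2*γ*α)) ((γ*(α+β))/(2*γ*α)) (by field_simp; ring),
      hTP'A, hTP'B, hTP'C, hD₃, hE₃, hF₃]
    match_scalars <;> (field_simp; ring)
  have hptg1B : TP (TP'.symm B) = ((α*(γ-β))/(2*γ*α)) • A + ((β*(γ+α))/(2*γ*α)) • B + ((γ*(α-β))/(2*γ*α)) • C := by
    rw [hsymg1B, comb TP A B C ((α*(β+γ))/(2*γ*α)) ((-(β*(γ+α)))/(2*γ*α)) ((γ*(α+β))/(2*γ*α)) (by field_simp; ring),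
      hTPA, hTPB, hTPC, hD, hE, hF]
    match_scalars <;> (field_simp; ring)
  have hSg1B : α*β*(γ-β)*(γ+α)*X + α*γ*(γ-β)*(α-β)*Y + β*γ*(γ+α)*(α-β)*Z = 0 := by
    linear_combination (-2*β*(γ+α)) * h1 + h2
  have g1B : qeval a b c d e f (TP (TP'.symm B)) = 0 := by
    rw [hptg1B, key ((α*(γ-β))/(2*γ*α)) ((β*(γ+α))/(2*γ*α)) ((γ*(α-β))/(2*γ*α)) (by field_simp; ring)]
    linear_combination (1/(4*γ^2*α^2)) * hSg1B
  have hsymg1C : TP'.symm C = ((α*(β+γ))/(2*α*β)) • A + ((β*(γ+α))/(2*α*β)) • B + ((-(γ*(α+β)))/(2*α*β)) • C := by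
    apply symm_eq
    rw [comb TP' A B C ((α*(β+γ))/(2*α*β)) ((β*(γ+α))/(2*α*β)) ((-(γ*(α+β)))/(2*α*β)) (by field_simp; ring),
      hTP'A, hTP'B, hTP'C, hD₃, hE₃, hF₃]
    match_scalars <;> (field_simp; ring)
  have hptg1C : TP (TP'.symm C) = ((α*(β-γ))/(2*α*β)) • A + ((β*(α-γ))/(2*α*β)) • B + ((γ*(α+β))/(2*α*β)) • C := by
    rw [hsymg1C, comb TP A B C ((α*(β+γ))/(2*α*β)) ((β*(γ+α))/(2*α*β)) ((-(γ*(α+β)))/(2*α*β)) (by field_simp; ring),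
      hTPA, hTPB, hTPC, hD, hE, hF]
    match_scalars <;> field_simp <;> ring
  have hSg1C : α*β*(β-γ)*(α-γ)*X + α*γ*(β-γ)*(α+β)*Y + β*γ*(α-γ)*(α+β)*Z = 0 := by
    linear_combination (-2*γ*(α+β)) * h1 + h2
  have g1C : qeval a b c d e f (TP (TP'.symm C)) = 0 := by
    rw [hptg1C, key ((α*(β-γ))/(2*α*β)) ((β*(α-γ))/(2*α*β)) ((γ*(α+β))/(2*α*β)) (by field_simp; ring)]
    linear_combination (1/(4*α^2*β^2)) * hSg1C
  have hsymg2A : TP.symm A = ((-(β+γ))/(2*α)) • A + ((γ+α)/(2*α)) • B + ((α+β)/(2*α)) • C := by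
    apply symm_eq
    rw [comb TP A B C ((-(β+γ))/(2*α)) ((γ+α)/(2*α)) ((α+β)/(2*α)) (by field_simp; ring),
      hTPA, hTPB, hTPC, hD, hE, hF]
    match_scalars <;> (field_simp; ring)
  have hptg2A : TP' (TP.symm A) = ((β+γ)/(2*α)) • A + ((α-γ)/(2*α)) • B + ((α-β)/(2*α)) • C := by
    rw [hsymg2A, comb TP' A B C ((-(β+γ))/(2*α)) ((γ+α)/(2*α)) ((α+β)/(2*α)) (by field_simp; ring),
      hTP'A, hTP'B, hTP'C, hD₃, hE₃, hF₃]
    match_scalars <;> (field_simp; ring)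
  have hSg2A : (β+γ)*(α-γ)*X + (β+γ)*(α-β)*Y + (α-γ)*(α-β)*Z = 0 := by
    have hT : α*β*γ*((β+γ)*(α-γ)*X + (β+γ)*(α-β)*Y + (α-γ)*(α-β)*Z) = 0 := by
      linear_combination ((β+γ)*(α*(β+γ-α)+β*γ)) * h1 + (α-β-γ) * h2
    exact (mul_eq_zero.mp hT).resolve_left (mul_ne_zero (mul_ne_zero hα hβ) hγ)
  have g2A : qeval a b c d e f (TP' (TP.symm A)) = 0 := by
    rw [hptg2A, key ((β+γ)/(2*α)) ((α-γ)/(2*α)) ((α-β)/(2*α)) (by field_simp; ring)]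
    linear_combination (1/(4*α^2)) * hSg2A
  have hsymg2B : TP.symm B = ((β+γ)/(2*β)) • A + ((-(γ+α))/(2*β)) • B + ((α+β)/(2*β)) • C := by
    apply symm_eq
    rw [comb TP A B C ((β+γ)/(2*β)) ((-(γ+α))/(2*β)) ((α+β)/(2*β)) (by field_simp; ring),
      hTPA, hTPB, hTPC, hD, hE, hF]
    match_scalars <;> (field_simp; ring)
  have hptg2B : TP' (TP.symm B) = ((β-γ)/(2*β)) • A + ((γ+α)/(2*β)) • B + ((β-α)/(2*β)) • C := by
    rw [hsymg2B, comb TP' A B C ((β+γ)/(2*β)) ((-(γ+α))/(2*β)) ((α+β)/(2*β)) (by field_simp; ring),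
      hTP'A, hTP'B, hTP'C, hD₃, hE₃, hF₃]
    match_scalars <;> field_simp <;> ring
  have hSg2B : (β-γ)*(γ+α)*X + (β-γ)*(β-α)*Y + (γ+α)*(β-α)*Z = 0 := by
    have hT : α*β*γ*((β-γ)*(γ+α)*X + (β-γ)*(β-α)*Y + (γ+α)*(β-α)*Z) = 0 := by
      linear_combination ((γ+α)*(β*(γ+α-β)+γ*α)) * h1 + (β-γ-α) * h2
    exact (mul_eq_zero.mp hT).resolve_left (mul_ne_zero (mul_ne_zero hα hβ) hγ)
  have g2B : qeval a b c d e f (TP' (TP.symm B)) = 0 := by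
    rw [hptg2B, key ((β-γ)/(2*β)) ((γ+α)/(2*β)) ((β-α)/(2*β)) (by field_simp; ring)]
    linear_combination (1/(4*β^2)) * hSg2B
  have hsymg2C : TP.symm C = ((β+γ)/(2*γ)) • A + ((γ+α)/(2*γ)) • B + ((-(α+β))/(2*γ)) • C := by
    apply symm_eq
    rw [comb TP A B C ((β+γ)/(2*γ)) ((γ+α)/(2*γ)) ((-(α+β))/(2*γ)) (by field_simp; ring),
      hTPA, hTPB, hTPC, hD, hE, hF]
    match_scalars <;> (field_simp; ring)
  have hptg2C : TP' (TP.symm C) = ((γ-β)/(2*γ)) • A + ((γ-α)/(2*γ)) • B + ((α+β)/(2*γ)) • C := by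
    rw [hsymg2C, comb TP' A B C ((β+γ)/(2*γ)) ((γ+α)/(2*γ)) ((-(α+β))/(2*γ)) (by field_simp; ring),
      hTP'A, hTP'B, hTP'C, hD₃, hE₃, hF₃]
    match_scalars <;> (field_simp; ring)
  have hSg2C : (γ-β)*(γ-α)*X + (γ-β)*(α+β)*Y + (γ-α)*(α+β)*Z = 0 := by
    have hT : α*β*γ*((γ-β)*(γ-α)*X + (γ-β)*(α+β)*Y + (γ-α)*(α+β)*Z) = 0 := by
      linear_combination ((α+β)*(γ*(α+β-γ)+α*β)) * h1 + (γ-α-β) * h2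
    exact (mul_eq_zero.mp hT).resolve_left (mul_ne_zero (mul_ne_zero hα hβ) hγ)
  have g2C : qeval a b c d e f (TP' (TP.symm C)) = 0 := by
    rw [hptg2C, key ((γ-β)/(2*γ)) ((γ-α)/(2*γ)) ((α+β)/(2*γ)) (by field_simp; ring)]
    linear_combination (1/(4*γ^2)) * hSg2C
  rintro N hN
  simp only [Set.mem_insert_iff, Set.mem_singleton_iff] at hN
  rcases hN with rfl | rfl | rfl
  · exact ⟨g1A, g2A⟩
  · exact ⟨g1B, g2B⟩
  · exact ⟨g1C, g2C⟩
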